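/- Let V be a finite-dimensional real inner product space, φ an alternating p-form of comass one on V, and X ⊆ V a nonempty open set. Then the following are equivalent: (1) for every nonempty compact set K ⊆ X the hull K̂ is a compact subset of X; (2) there exists a C^∞ φ-plurisubharmonic function f : X → ℝ which is a proper exhaustion of X, i.e. for every c ∈ ℝ the set {x ∈ X : f(x) ≤ c} is compact. (Theorem 4.3, Euclidean case) -/

import Mathlib

open scoped RealInnerProductSpace

noncomputable section

variable {V : Type*} [NormedAddCommGroup V] [InnerProductSpace ℝ V] [FiniteDimensional ℝ V]

/-- `f` is `φ`-plurisubharmonic on `U`: `Σ_j D²f(x)(e_j,e_j) ≥ 0` for every `x ∈ U` and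
every `φ`-plane `(e₁,…,e_p)` (an orthonormal `p`-tuple with `φ(e₁,…,e_p) = 1`). -/
def IsPSH {p : ℕ} (φ : V [⋀^Fin p]→ₗ[ℝ] ℝ) (U : Set V) (f : V → ℝ) : Prop :=
  ∀ x ∈ U, ∀ e : Fin p → V, Orthonormal ℝ e → φ e = 1 →
    0 ≤ ∑ j, iteratedFDeriv ℝ 2 f x ![e j, e j]

/-- The `(X,φ)`-convex hull of `K`:
`K̂ = {x ∈ X : f(x) ≤ sup_K f for all f ∈ PSH(X,φ)}`, where `PSH(X,φ)` is the set of
smooth `φ`-plurisubharmonic functions on `X`. -/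
def pshHull {p : ℕ} (φ : V [⋀^Fin p]→ₗ[ℝ] ℝ) (X K : Set V) : Set V :=
  {x ∈ X | ∀ f : V → ℝ, ContDiffOn ℝ (⊤ : ℕ∞) f X → IsPSH φ X f → f x ≤ sSup (f '' K)}

/-! ### Auxiliary material -/

open Filter Set Topology
open scoped ContDiff

/-- An antiderivative of `expNegInvGlue`: a smooth, nonnegative, nondecreasing convex function
vanishing on `(-∞, 0]` and positive on `(0, ∞)`. -/
def chiFn (t : ℝ) : ℝ := ∫ u in (0:ℝ)..t, expNegInvGlue u

lemma contExpNegInvGlue : Continuous expNegInvGlue := (expNegInvGlue.contDiff (n := 0)).continuous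

lemma chiFn_hasDerivAt (t : ℝ) : HasDerivAt chiFn (expNegInvGlue t) t :=
  (contExpNegInvGlue.integral_hasStrictDerivAt 0 t).hasDerivAt

lemma deriv_chiFn : deriv chiFn = expNegInvGlue := funext fun t => (chiFn_hasDerivAt t).deriv

lemma chiFn_contDiff : ContDiff ℝ (⊤ : ℕ∞) chiFn := by
  rw [show ((⊤ : ℕ∞) : WithTop ℕ∞) = ∞ from rfl, contDiff_infty_iff_deriv]
  refine ⟨fun t => (chiFn_hasDerivAt t).differentiableAt, ?_⟩
  rw [deriv_chiFn]
  exact expNegInvGlue.contDiff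

lemma monotone_expNegInvGlue : Monotone expNegInvGlue := by
  intro a b hab
  rcases le_or_gt b 0 with hb | hb
  · rw [expNegInvGlue.zero_of_nonpos (hab.trans hb), expNegInvGlue.zero_of_nonpos hb]
  rcases le_or_gt a 0 with ha | ha
  · rw [expNegInvGlue.zero_of_nonpos ha]; exact (expNegInvGlue.pos_of_pos hb).le
  · show expNegInvGlue a ≤ expNegInvGlue b
    rw [expNegInvGlue, if_neg (not_le.2 ha), expNegInvGlue, if_neg (not_le.2 hb)]
    exact Real.exp_le_exp.2 (by
      have h1 : b⁻¹ ≤ a⁻¹ := by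
        rw [inv_le_inv₀ (ha.trans_le hab) ha]
        exact hab
      linarith)

/-- The derivative of a monotone function is nonnegative. -/
lemma monotone_deriv_nonneg {f : ℝ → ℝ} (hf : Monotone f) (t : ℝ) : 0 ≤ deriv f t := by
  by_cases hd : DifferentiableAt ℝ f t
  · have h := hasDerivAt_iff_tendsto_slope.1 hd.hasDerivAt
    have h' : Tendsto (slope f t) (𝓝[>] t) (𝓝 (deriv f t)) :=
      h.mono_left (nhdsWithin_mono t fun y hy => ne_of_gt hy)
    refine ge_of_tendsto h' ?_
    filter_upwards [self_mem_nhdsWithin] with y hy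
    have hyt : (0:ℝ) < y - t := sub_pos.2 hy
    rw [slope_def_field]
    exact div_nonneg (sub_nonneg.2 (hf hy.le)) hyt.le
  · rw [deriv_zero_of_not_differentiableAt hd]

lemma chiFn_zero_of_nonpos {t : ℝ} (ht : t ≤ 0) : chiFn t = 0 := by
  rw [chiFn]
  rw [intervalIntegral.integral_congr (g := fun _ => (0:ℝ)) ?_, intervalIntegral.integral_zero]
  intro u hu
  rw [uIcc_of_ge ht] at hu
  exact expNegInvGlue.zero_of_nonpos hu.2

lemma chiFn_nonneg (t : ℝ) : 0 ≤ chiFn t := by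
  rcases le_or_gt t 0 with h | h
  · rw [chiFn_zero_of_nonpos h]
  · exact intervalIntegral.integral_nonneg h.le fun u _ => expNegInvGlue.nonneg u

lemma chiFn_pos {t : ℝ} (ht : 0 < t) : 0 < chiFn t :=
  intervalIntegral.intervalIntegral_pos_of_pos_on
    (contExpNegInvGlue.intervalIntegrable 0 t)
    (fun u hu => expNegInvGlue.pos_of_pos hu.1) ht

/-- Scaled and shifted version of `chiFn`. -/
def sigFn (a c t : ℝ) : ℝ := a * chiFn (t - c)

lemma sigFn_contDiff (a c : ℝ) : ContDiff ℝ (⊤ : ℕ∞) (sigFn a c) :=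
  contDiff_const.mul (chiFn_contDiff.comp (contDiff_id.sub contDiff_const))

lemma sigFn_hasDerivAt (a c t : ℝ) : HasDerivAt (sigFn a c) (a * expNegInvGlue (t - c)) t := by
  have h1 : HasDerivAt (fun s : ℝ => chiFn (s - c)) (expNegInvGlue (t - c) * 1) t :=
    by have := (chiFn_hasDerivAt (t - c)).comp t ((hasDerivAt_id t).sub_const c); exact this
  have h2 := h1.const_mul a; rw [mul_one] at h2; exact h2

lemma deriv_sigFn (a c : ℝ) : deriv (sigFn a c) = fun t => a * expNegInvGlue (t - c) :=
  funext fun t => (sigFn_hasDerivAt a c t).deriv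

lemma deriv_sigFn_nonneg {a : ℝ} (ha : 0 ≤ a) (c t : ℝ) : 0 ≤ deriv (sigFn a c) t := by
  rw [deriv_sigFn]; exact mul_nonneg ha (expNegInvGlue.nonneg _)

lemma deriv2_sigFn_nonneg {a : ℝ} (ha : 0 ≤ a) (c t : ℝ) : 0 ≤ deriv (deriv (sigFn a c)) t := by
  rw [deriv_sigFn]
  refine monotone_deriv_nonneg (fun s u hsu => ?_) t
  exact mul_le_mul_of_nonneg_left (monotone_expNegInvGlue (sub_le_sub_right hsu c)) ha

lemma sigFn_nonneg {a : ℝ} (ha : 0 ≤ a) (c t : ℝ) : 0 ≤ sigFn a c t :=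
  mul_nonneg ha (chiFn_nonneg _)

lemma sigFn_eq_zero {a c t : ℝ} (h : t ≤ c) : sigFn a c t = 0 := by
  rw [sigFn, chiFn_zero_of_nonpos (sub_nonpos.2 h), mul_zero]

lemma sigFn_pos {a c t : ℝ} (ha : 0 < a) (h : c < t) : 0 < sigFn a c t :=
  mul_pos ha (chiFn_pos (sub_pos.2 h))

lemma one_le_inf' : (1 : WithTop ℕ∞) ≤ ((⊤ : ℕ∞) : WithTop ℕ∞) := WithTop.coe_le_coe.2 le_top

lemma two_le_inf' : ((1 : ℕ) : WithTop ℕ∞) + 1 ≤ ((⊤ : ℕ∞) : WithTop ℕ∞) :=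
  WithTop.coe_le_coe.2 le_top

/-- Second derivative of `σ ∘ g` via the chain rule. -/
lemma second_deriv_comp {X : Set V} (hXo : IsOpen X) {g : V → ℝ}
    (hg : ContDiffOn ℝ (⊤ : ℕ∞) g X) {x : V} (hx : x ∈ X) {σ : ℝ → ℝ}
    (hσ : ContDiff ℝ (⊤ : ℕ∞) σ) (v : V) :
    iteratedFDeriv ℝ 2 (fun z => σ (g z)) x ![v, v] =
      deriv (deriv σ) (g x) * (fderiv ℝ g x v) ^ 2
        + deriv σ (g x) * iteratedFDeriv ℝ 2 g x ![v, v] := by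
  have hσd : Differentiable ℝ σ := hσ.differentiable (by simp)
  have hσ' : ContDiff ℝ ((⊤ : ℕ∞) : WithTop ℕ∞) (deriv σ) := by
    have := (contDiff_infty_iff_deriv.mp (by exact_mod_cast hσ)).2
    exact_mod_cast this
  have hσ'd : Differentiable ℝ (deriv σ) := hσ'.differentiable (by simp)
  have hgx : ContDiffAt ℝ (⊤ : ℕ∞) g x := hg.contDiffAt (hXo.mem_nhds hx)
  have hdgx : DifferentiableAt ℝ g x := hgx.differentiableAt (by simp)
  have E1 : (fderiv ℝ (fun z => σ (g z))) =ᶠ[𝓝 x] fun y => deriv σ (g y) • fderiv ℝ g y := by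
    filter_upwards [hXo.mem_nhds hx] with y hy
    have hgy : ContDiffAt ℝ (⊤ : ℕ∞) g y := hg.contDiffAt (hXo.mem_nhds hy)
    have hdg : DifferentiableAt ℝ g y := hgy.differentiableAt (by simp)
    have h1 : HasFDerivAt (σ ∘ g) (deriv σ (g y) • fderiv ℝ g y) y :=
      ((hσd (g y)).hasDerivAt).comp_hasFDerivAt y hdg.hasFDerivAt
    exact h1.fderiv
  have hc : HasFDerivAt (fun y => deriv σ (g y))
      (deriv (deriv σ) (g x) • fderiv ℝ g x) x :=
    ((hσ'd (g x)).hasDerivAt).comp_hasFDerivAt x hdgx.hasFDerivAt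
  have hF : HasFDerivAt (fderiv ℝ g) (fderiv ℝ (fderiv ℝ g) x) x :=
    ((hgx.fderiv_right (m := 1) two_le_inf').differentiableAt
      (by simp)).hasFDerivAt
  have hA := hc.smul hF
  rw [iteratedFDeriv_two_apply, E1.fderiv_eq,
    HasFDerivAt.fderiv (f := fun y => deriv σ (g y) • fderiv ℝ g y) hA]
  rw [iteratedFDeriv_two_apply g]
  simp only [Matrix.cons_val_zero, Matrix.cons_val_one, Matrix.head_cons,
    ContinuousLinearMap.add_apply, ContinuousLinearMap.coe_smul', Pi.smul_apply,
    ContinuousLinearMap.smulRight_apply, ContinuousLinearMap.smul_apply, smul_eq_mul]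
  ring

/-- Composition of a PSH function with a smooth convex nondecreasing function is PSH. -/
lemma isPSH_comp {p : ℕ} (φ : V [⋀^Fin p]→ₗ[ℝ] ℝ) {X : Set V} (hXo : IsOpen X) {g : V → ℝ}
    (hg : ContDiffOn ℝ (⊤ : ℕ∞) g X) (hgp : IsPSH φ X g) {σ : ℝ → ℝ}
    (hσ : ContDiff ℝ (⊤ : ℕ∞) σ) (hσ1 : ∀ t, 0 ≤ deriv σ t)
    (hσ2 : ∀ t, 0 ≤ deriv (deriv σ) t) :
    IsPSH φ X (fun z => σ (g z)) := by
  intro x hx e he hφe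
  have hrw : ∀ j, iteratedFDeriv ℝ 2 (fun z => σ (g z)) x ![e j, e j] =
      deriv (deriv σ) (g x) * (fderiv ℝ g x (e j)) ^ 2
        + deriv σ (g x) * iteratedFDeriv ℝ 2 g x ![e j, e j] :=
    fun j => second_deriv_comp hXo hg hx hσ (e j)
  simp_rw [hrw]
  rw [Finset.sum_add_distrib, ← Finset.mul_sum, ← Finset.mul_sum]
  have h1 : 0 ≤ ∑ j, (fderiv ℝ g x (e j)) ^ 2 := Finset.sum_nonneg fun j _ => sq_nonneg _
  have h2 := hgp x hx e he hφe
  exact add_nonneg (mul_nonneg (hσ2 _) h1) (mul_nonneg (hσ1 _) h2)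

/-- A finite sum of PSH functions is PSH. -/
lemma isPSH_sum {p : ℕ} (φ : V [⋀^Fin p]→ₗ[ℝ] ℝ) {X : Set V} (hXo : IsOpen X) {ι : Type*}
    (s : Finset ι) (g : ι → V → ℝ) (hg : ∀ i ∈ s, ContDiffOn ℝ (⊤ : ℕ∞) (g i) X)
    (hgp : ∀ i ∈ s, IsPSH φ X (g i)) : IsPSH φ X (fun z => ∑ i ∈ s, g i z) := by
  intro x hx e he hφe
  have hU : UniqueDiffOn ℝ X := hXo.uniqueDiffOn
  have key : iteratedFDeriv ℝ 2 (fun z => ∑ i ∈ s, g i z) x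
      = ∑ i ∈ s, iteratedFDeriv ℝ 2 (g i) x := by
    rw [← iteratedFDerivWithin_of_isOpen 2 hXo hx, ← Finset.sum_fn,
      iteratedFDerivWithin_sum_apply hU hx
        (fun i hi => (hg i hi).of_le (WithTop.coe_le_coe.2 le_top) x hx)]
    exact Finset.sum_congr rfl fun i _ => iteratedFDerivWithin_of_isOpen 2 hXo hx
  simp_rw [key, ContinuousMultilinearMap.sum_apply]
  rw [Finset.sum_comm]
  exact Finset.sum_nonneg fun i hi => hgp i hi x hx e he hφe

lemma isPSH_zero {p : ℕ} (φ : V [⋀^Fin p]→ₗ[ℝ] ℝ) (X : Set V) :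
    IsPSH φ X (fun _ => (0 : ℝ)) := by
  intro x hx e he hφe
  have : (iteratedFDeriv ℝ 2 fun _ : V => (0:ℝ)) = 0 := iteratedFDeriv_zero_fun
  simp [this]

/-- Separation of a compact set from the complement of the hull by a nonnegative PSH function. -/
lemma exists_psi {p : ℕ} (φ : V [⋀^Fin p]→ₗ[ℝ] ℝ) {X : Set V} (hXo : IsOpen X)
    {K A : Set V} (hK : IsCompact K) (hKX : K ⊆ X) (hA : IsCompact A) (hAX : A ⊆ X)
    (hdisj : ∀ y ∈ A, y ∉ pshHull φ X K) (c : ℝ) :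
    ∃ ψ : V → ℝ, ContDiffOn ℝ (⊤ : ℕ∞) ψ X ∧ IsPSH φ X ψ ∧ (∀ z, 0 ≤ ψ z) ∧
      (∀ z ∈ K, ψ z = 0) ∧ ∀ z ∈ A, c ≤ ψ z := by
  rcases A.eq_empty_or_nonempty with rfl | hAne
  · exact ⟨fun _ => 0, contDiffOn_const, isPSH_zero φ X, fun _ => le_rfl,
      fun _ _ => rfl, fun z hz => absurd hz (Set.notMem_empty z)⟩
  have hGex : ∀ y : A, ∃ g : V → ℝ, ContDiffOn ℝ (⊤ : ℕ∞) g X ∧ IsPSH φ X g ∧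
      sSup (g '' K) < g y := by
    rintro ⟨y, hy⟩
    have h := hdisj y hy
    simp only [pshHull, Set.mem_setOf_eq, not_and, not_forall] at h
    obtain ⟨g, h1, h2, h3⟩ := h (hAX hy)
    exact ⟨g, h1, h2, lt_of_not_ge h3⟩
  choose G hG1 hG2 hG3 using hGex
  set cc : A → ℝ := fun y => sSup (G y '' K) with hcc
  have hGK : ∀ (y : A), ∀ z ∈ K, G y z ≤ cc y := fun y z hz =>
    le_csSup (hK.image_of_continuousOn ((hG1 y).continuousOn.mono hKX)).bddAbove ⟨z, hz, rfl⟩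
  have hUopen : ∀ y : A, IsOpen {z | z ∈ X ∧ cc y < G y z} := by
    intro y
    rw [isOpen_iff_mem_nhds]
    rintro z ⟨hzX, hzlt⟩
    have hct : ContinuousAt (G y) z := (hG1 y).continuousOn.continuousAt (hXo.mem_nhds hzX)
    have h1 : (G y) ⁻¹' (Set.Ioi (cc y)) ∈ 𝓝 z := hct (Ioi_mem_nhds hzlt)
    exact Filter.mem_of_superset (Filter.inter_mem (hXo.mem_nhds hzX) h1)
      fun w hw => ⟨hw.1, hw.2⟩
  have hcov : A ⊆ ⋃ y : A, {z | z ∈ X ∧ cc y < G y z} := fun z hz =>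
    Set.mem_iUnion.2 ⟨⟨z, hz⟩, hAX hz, hG3 ⟨z, hz⟩⟩
  obtain ⟨t, ht⟩ := hA.elim_finite_subcover _ hUopen hcov
  set Ψ : V → ℝ := fun z => ∑ y ∈ t, chiFn (G y z - cc y) with hΨ
  have hΨcont : ContinuousOn Ψ A := by
    refine continuousOn_finset_sum t fun y _ => ?_
    exact chiFn_contDiff.continuous.comp_continuousOn
      (((hG1 y).continuousOn.mono hAX).sub continuousOn_const)
  have hΨpos : ∀ z ∈ A, 0 < Ψ z := by
    intro z hz
    obtain ⟨y, hyt, hyz⟩ := Set.mem_iUnion₂.1 (ht hz)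
    exact Finset.sum_pos' (fun i _ => chiFn_nonneg _)
      ⟨y, hyt, chiFn_pos (sub_pos.2 hyz.2)⟩
  obtain ⟨z₀, hz₀A, hz₀min⟩ := hA.exists_isMinOn hAne hΨcont
  have hδpos : 0 < Ψ z₀ := hΨpos z₀ hz₀A
  set a := max 0 (c / Ψ z₀) with ha_def
  have ha : 0 ≤ a := le_max_left _ _
  refine ⟨fun z => ∑ y ∈ t, sigFn a (cc y) (G y z), ?_, ?_, ?_, ?_, ?_⟩
  · exact ContDiffOn.sum fun y _ => (sigFn_contDiff a (cc y)).comp_contDiffOn (hG1 y)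
  · exact isPSH_sum φ hXo t _ (fun y _ => (sigFn_contDiff a (cc y)).comp_contDiffOn (hG1 y))
      (fun y _ => isPSH_comp φ hXo (hG1 y) (hG2 y) (sigFn_contDiff a (cc y))
        (deriv_sigFn_nonneg ha (cc y)) (deriv2_sigFn_nonneg ha (cc y)))
  · exact fun z => Finset.sum_nonneg fun y _ => sigFn_nonneg ha _ _
  · exact fun z hz => Finset.sum_eq_zero fun y _ => sigFn_eq_zero (hGK y z hz)
  · intro z hz
    show c ≤ ∑ y ∈ t, sigFn a (cc y) (G y z)
    rcases le_or_gt c 0 with hc | hc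
    · exact hc.trans (Finset.sum_nonneg fun y _ => sigFn_nonneg ha _ _)
    · have haeq : a = c / Ψ z₀ := max_eq_right (div_pos hc hδpos).le
      have hsum : ∑ y ∈ t, sigFn a (cc y) (G y z) = a * Ψ z := by
        simp only [hΨ, Finset.mul_sum, sigFn]
      rw [hsum, haeq]
      calc c = (c / Ψ z₀) * Ψ z₀ := by field_simp
        _ ≤ (c / Ψ z₀) * Ψ z :=
          mul_le_mul_of_nonneg_left ((isMinOn_iff.1 hz₀min) z hz) (div_pos hc hδpos).le

/-- Construction of an exhausting sequence of compact sets whose hulls are swallowed. -/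
lemma exists_seq {p : ℕ} (φ : V [⋀^Fin p]→ₗ[ℝ] ℝ) {X : Set V} (hXo : IsOpen X)
    (hHull : ∀ K : Set V, K ⊆ X → K.Nonempty → IsCompact K → IsCompact (pshHull φ X K))
    (B : ℕ → Set V) (hBc : ∀ n, IsCompact (B n)) (hBX : ∀ n, B n ⊆ X)
    {x₀ : V} (hx₀ : x₀ ∈ X) :
    ∃ L : ℕ → Set V, (∀ n, IsCompact (L n)) ∧ (∀ n, (L n).Nonempty) ∧ (∀ n, L n ⊆ X) ∧
      ∀ n, (L n ∪ B n) ∪ pshHull φ X (L n ∪ B n) ⊆ interior (L (n + 1)) := by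
  have step : ∀ C : Set V, IsCompact C → C.Nonempty → C ⊆ X →
      ∃ C' : Set V, IsCompact C' ∧ C'.Nonempty ∧ C' ⊆ X ∧
        C ∪ pshHull φ X C ⊆ interior C' := by
    intro C hC hCne hCX
    have hH := hHull C hCX hCne hC
    have hD : IsCompact (C ∪ pshHull φ X C) := hC.union hH
    have hDX : C ∪ pshHull φ X C ⊆ X := Set.union_subset hCX fun z hz => hz.1
    obtain ⟨δ, hδpos, hδ⟩ := hD.exists_cthickening_subset_open hXo hDX
    refine ⟨Metric.cthickening δ (C ∪ pshHull φ X C), hD.cthickening,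
      hCne.mono (Set.subset_union_left.trans (Metric.self_subset_cthickening _)), hδ, ?_⟩
    exact (Metric.self_subset_thickening hδpos _).trans
      (Metric.thickening_subset_interior_cthickening δ _)
  choose! step' h1 h2 h3 h4 using step
  set L : ℕ → Set V := fun n => Nat.rec ({x₀} : Set V) (fun n Ln => step' (Ln ∪ B n)) n with hL
  have hLsucc : ∀ n, L (n + 1) = step' (L n ∪ B n) := fun n => rfl
  have key : ∀ n, IsCompact (L n) ∧ (L n).Nonempty ∧ L n ⊆ X := by
    intro n
    induction n with
    | zero => exact ⟨isCompact_singleton, ⟨x₀, rfl⟩, Set.singleton_subset_iff.2 hx₀⟩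
    | succ n ih =>
      have hc : IsCompact (L n ∪ B n) := ih.1.union (hBc n)
      have hne : (L n ∪ B n).Nonempty := ih.2.1.mono Set.subset_union_left
      have hsub : L n ∪ B n ⊆ X := Set.union_subset ih.2.2 (hBX n)
      rw [hLsucc]
      exact ⟨h1 _ hc hne hsub, h2 _ hc hne hsub, h3 _ hc hne hsub⟩
  refine ⟨L, fun n => (key n).1, fun n => (key n).2.1, fun n => (key n).2.2, fun n => ?_⟩
  rw [hLsucc]
  exact h4 _ ((key n).1.union (hBc n)) ((key n).2.1.mono Set.subset_union_left)
    (Set.union_subset (key n).2.2 (hBX n))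

/-- Theorem 4.3 (Euclidean case): `X` is `φ`-convex (hulls of compact subsets are compact)
if and only if `X` admits a smooth `φ`-plurisubharmonic proper exhaustion function. -/
theorem phiConvex_iff_exists_psh_exhaustion {p : ℕ} (hp : 1 ≤ p)
    (φ : V [⋀^Fin p]→ₗ[ℝ] ℝ)
    (hcomass : ∀ e : Fin p → V, Orthonormal ℝ e → φ e ≤ 1)
    (X : Set V) (hXo : IsOpen X) (hXne : X.Nonempty) :
    (∀ K : Set V, K ⊆ X → K.Nonempty → IsCompact K → IsCompact (pshHull φ X K)) ↔
      ∃ f : V → ℝ, ContDiffOn ℝ (⊤ : ℕ∞) f X ∧ IsPSH φ X f ∧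
        ∀ c : ℝ, IsCompact {x ∈ X | f x ≤ c} := by
  classical
  constructor
  · -- hard direction: build the exhaustion function
    intro hHull
    obtain ⟨x₀, hx₀⟩ := hXne
    set B : ℕ → Set V := fun n =>
      Metric.closedBall 0 n \ Metric.thickening (1 / (n + 1)) Xᶜ with hB
    have hBc : ∀ n, IsCompact (B n) := fun n =>
      (isCompact_closedBall 0 n).diff Metric.isOpen_thickening
    have hBX : ∀ n, B n ⊆ X := by
      intro n z hz
      by_contra hzX
      exact hz.2 (Metric.self_subset_thickening (by positivity) Xᶜ hzX)
    have hBcov : ∀ x ∈ X, ∃ n, x ∈ B n := by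
      intro x hx
      obtain ⟨ε, hεpos, hεball⟩ := Metric.isOpen_iff.1 hXo x hx
      obtain ⟨n, hn⟩ := exists_nat_one_div_lt hεpos
      obtain ⟨m, hm⟩ := exists_nat_ge ‖x‖
      refine ⟨max n m, ⟨?_, ?_⟩⟩
      · simp only [Metric.mem_closedBall, dist_zero_right]
        exact hm.trans (by exact_mod_cast le_max_right n m)
      · intro hmem
        obtain ⟨z, hzc, hzd⟩ := Metric.mem_thickening_iff.1 hmem
        have hle : 1 / (((max n m : ℕ) : ℝ) + 1) ≤ 1 / ((n : ℝ) + 1) := by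
          apply one_div_le_one_div_of_le (by positivity)
          have : (n : ℝ) ≤ ((max n m : ℕ) : ℝ) := by exact_mod_cast le_max_left n m
          linarith
        have : dist z x < ε := by
          rw [dist_comm]
          exact hzd.trans_le (hle.trans hn.le)
        exact hzc (hεball (Metric.mem_ball.2 this))
    obtain ⟨L, hLc, hLne, hLX, hLstep⟩ := exists_seq φ hXo hHull B hBc hBX hx₀
    have hLmono1 : ∀ n, L n ⊆ interior (L (n + 1)) := fun n =>
      (Set.subset_union_left.trans Set.subset_union_left).trans (hLstep n)
    have hBint : ∀ n, B n ⊆ interior (L (n + 1)) := fun n =>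
      (Set.subset_union_right.trans Set.subset_union_left).trans (hLstep n)
    have hLsub : ∀ n, L n ⊆ L (n + 1) := fun n => (hLmono1 n).trans interior_subset
    have hLmono : ∀ {m n : ℕ}, m ≤ n → L m ⊆ L n := by
      intro m n h
      induction h with
      | refl => exact subset_rfl
      | step h ih => exact ih.trans (hLsub _)
    have hpsi : ∀ j : ℕ, ∃ ψ : V → ℝ, ContDiffOn ℝ (⊤ : ℕ∞) ψ X ∧ IsPSH φ X ψ ∧
        (∀ z, 0 ≤ ψ z) ∧ (∀ z ∈ L j ∪ B j, ψ z = 0) ∧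
        ∀ z ∈ L (j + 2) \ interior (L (j + 1)), (j : ℝ) ≤ ψ z := by
      intro j
      refine exists_psi φ hXo ((hLc j).union (hBc j)) (Set.union_subset (hLX j) (hBX j))
        ((hLc (j + 2)).diff isOpen_interior) (fun z hz => hLX (j + 2) hz.1) ?_ (j : ℝ)
      intro y hy hyhull
      exact hy.2 (hLstep j (Set.mem_union_right _ hyhull))
    choose ψ hψ1 hψ2 hψ3 hψ4 hψ5 using hpsi
    set f : V → ℝ := fun x => ∑' j, ψ j x with hf
    have hsupp : ∀ m z, z ∈ L m → ∀ j, m ≤ j → ψ j z = 0 := fun m z hz j hj =>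
      hψ4 j z (Set.mem_union_left _ (hLmono hj hz))
    have hloc : ∀ m, ∀ z ∈ interior (L m), f z = ∑ j ∈ Finset.range m, ψ j z := by
      intro m z hz
      exact tsum_eq_sum fun j hj =>
        hsupp m z (interior_subset hz) j (by simpa using hj)
    have hcovint : ∀ x ∈ X, ∃ m, x ∈ interior (L m) := by
      intro x hx
      obtain ⟨n, hn⟩ := hBcov x hx
      exact ⟨n + 1, hBint n hn⟩
    have hsummable : ∀ x ∈ X, Summable fun j => ψ j x := by
      intro x hx
      obtain ⟨m, hm⟩ := hcovint x hx
      exact summable_of_ne_finset_zero (s := Finset.range m) fun j hj =>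
        hsupp m x (interior_subset hm) j (by simpa using hj)
    have hfC : ContDiffOn ℝ (⊤ : ℕ∞) f X := by
      intro x hx
      obtain ⟨m, hm⟩ := hcovint x hx
      have hsum : ContDiffOn ℝ (⊤ : ℕ∞) (fun z => ∑ j ∈ Finset.range m, ψ j z) X :=
        ContDiffOn.sum fun j _ => hψ1 j
      have hcd : ContDiffAt ℝ (⊤ : ℕ∞) f x := by
        refine (hsum.contDiffAt (hXo.mem_nhds hx)).congr_of_eventuallyEq ?_
        filter_upwards [isOpen_interior.mem_nhds hm] with z hz
        exact hloc m z hz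
      exact hcd.contDiffWithinAt
    have hfPSH : IsPSH φ X f := by
      intro x hx e he hφe
      obtain ⟨m, hm⟩ := hcovint x hx
      have hEq : iteratedFDeriv ℝ 2 f x
          = iteratedFDeriv ℝ 2 (fun z => ∑ j ∈ Finset.range m, ψ j z) x := by
        rw [← iteratedFDerivWithin_of_isOpen 2 isOpen_interior hm,
          ← iteratedFDerivWithin_of_isOpen (f := fun z => ∑ j ∈ Finset.range m, ψ j z) 2
            isOpen_interior hm]
        exact iteratedFDerivWithin_congr (fun z hz => hloc m z hz) hm 2
      simp_rw [hEq]
      exact isPSH_sum φ hXo (Finset.range m) (fun j => ψ j)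
        (fun j _ => hψ1 j) (fun j _ => hψ2 j) x hx e he hφe
    refine ⟨f, hfC, hfPSH, ?_⟩
    intro c
    set S := {x ∈ X | f x ≤ c} with hS
    set M := ⌈c⌉₊ + 3 with hM
    have hfge : ∀ x ∈ X, ∀ j : ℕ, x ∈ L (j + 2) \ interior (L (j + 1)) → (j : ℝ) ≤ f x := by
      intro x hx j hxj
      calc (j : ℝ) ≤ ψ j x := hψ5 j x hxj
        _ ≤ f x := Summable.le_tsum (hsummable x hx) j fun i _ => hψ3 i x
    have hsubM : S ⊆ L M := by
      rintro x ⟨hxX, hxf⟩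
      have hex : ∃ m, x ∈ interior (L m) := hcovint x hxX
      set m₀ := Nat.find hex with hm₀
      have hspec : x ∈ interior (L m₀) := Nat.find_spec hex
      rcases le_or_gt m₀ 2 with hle | hgt
      · exact hLmono (hle.trans (by omega)) (interior_subset hspec)
      · set j := m₀ - 2 with hj
        have hj2 : j + 2 = m₀ := by omega
        have hmem : x ∈ L (j + 2) \ interior (L (j + 1)) := by
          constructor
          · rw [hj2]; exact interior_subset hspec
          · exact Nat.find_min hex (by omega)
        have hjc : (j : ℝ) ≤ c := (hfge x hxX j hmem).trans hxf
        have hjceil : j ≤ ⌈c⌉₊ := by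
          exact_mod_cast Nat.cast_le.1 (hjc.trans (Nat.le_ceil c))
        exact hLmono (by omega) (interior_subset hspec)
    have hSclosed : IsClosed S := by
      refine isClosed_of_closure_subset ?_
      intro z hzcl
      have hzL : z ∈ L M := ((hLc M).isClosed.closure_subset_iff.2 hsubM) hzcl
      have hzX : z ∈ X := hLX M hzL
      have hct : ContinuousAt f z := hfC.continuousOn.continuousAt (hXo.mem_nhds hzX)
      refine ⟨hzX, ?_⟩
      haveI : (𝓝[S] z).NeBot := mem_closure_iff_nhdsWithin_neBot.1 hzcl
      have hev : ∀ᶠ w in 𝓝[S] z, f w ≤ c :=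
        Filter.eventually_of_mem self_mem_nhdsWithin fun w hw => hw.2
      exact le_of_tendsto hct.continuousWithinAt hev
    exact IsCompact.of_isClosed_subset (hLc M) hSclosed hsubM
  · -- easy direction
    rintro ⟨f, hfC, hfPSH, hfEx⟩ K hKX hKne hKc
    set c := sSup (f '' K) with hc
    set S := {x ∈ X | f x ≤ c} with hS
    have hSc : IsCompact S := hfEx c
    have hhullS : pshHull φ X K ⊆ S := fun x hx => ⟨hx.1, hx.2 f hfC hfPSH⟩
    have heq : pshHull φ X K =
        ⋂ g : {g : V → ℝ // ContDiffOn ℝ (⊤ : ℕ∞) g X ∧ IsPSH φ X g},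
          (S ∩ (g.1) ⁻¹' Set.Iic (sSup (g.1 '' K))) := by
      ext x
      constructor
      · intro hx
        exact Set.mem_iInter.2 fun g => ⟨hhullS hx, hx.2 g.1 g.2.1 g.2.2⟩
      · intro hx
        have hxS : x ∈ S := (Set.mem_iInter.1 hx ⟨f, hfC, hfPSH⟩).1
        exact ⟨hxS.1, fun g hg1 hg2 => (Set.mem_iInter.1 hx ⟨g, hg1, hg2⟩).2⟩
    have hclosed : IsClosed (⋂ g : {g : V → ℝ // ContDiffOn ℝ (⊤ : ℕ∞) g X ∧ IsPSH φ X g},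
        (S ∩ (g.1) ⁻¹' Set.Iic (sSup (g.1 '' K)))) :=
      isClosed_iInter fun g =>
        (g.2.1.continuousOn.mono fun z hz => hz.1).preimage_isClosed_of_isClosed
          hSc.isClosed isClosed_Iic
    rw [heq]
    exact IsCompact.of_isClosed_subset hSc hclosed
      ((Set.iInter_subset _ ⟨f, hfC, hfPSH⟩).trans Set.inter_subset_left)
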